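/- Fix an integer ℓ ≥ 1 and let S be a finite set of intervals with endpoints in {0, …, 2^ℓ − 1}. For 1 ≤ i ≤ ℓ, let S_i be the set of intervals of S having level i. Then Opt(S_i) equals the number of distinct level-i integers that are contained in some interval of S_i, and consequently Σ_{i=1}^{ℓ} Opt(S_i) ≥ Opt(S). (This shows that accepting greedily within a uniformly random level loses at most a factor ℓ = ⌈log m⌉, which yields the robustness guarantee (1 − α)/⌈log m⌉ of the algorithm RobustTrust.) -/

import Mathlib

open scoped Classical

/-- An interval is a pair `(a, b)` of integers; it is *valid* when `a < b`. -/
abbrev Iv := ℤ × ℤ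

/-- Two intervals `(a,b)` and `(c,d)` overlap if `max a c < min b d`. -/
def Overlap (i j : Iv) : Prop := max i.1 j.1 < min i.2 j.2

instance : ∀ i j : Iv, Decidable (Overlap i j) := fun _ _ => by
  unfold Overlap; infer_instance

/-- A finite set of intervals is pairwise non-overlapping. -/
def NonOverlapping (T : Finset Iv) : Prop :=
  ∀ i ∈ T, ∀ j ∈ T, i ≠ j → ¬ Overlap i j

instance : DecidablePred NonOverlapping := fun _ => by
  unfold NonOverlapping; infer_instance

/-- `Opt S` is the maximum cardinality of a pairwise non-overlapping subset of `S`. -/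
def Opt (S : Finset Iv) : ℕ :=
  (S.powerset.filter fun T => NonOverlapping T).sup Finset.card

/-- The level of an integer `c` (with `1 ≤ c ≤ 2^ℓ − 1`) is `ℓ − v₂(c)` where `v₂` is
the 2-adic valuation. -/
def lvlZ (ℓ : ℕ) (c : ℤ) : ℕ := ℓ - padicValNat 2 c.toNat

/-- The level of an interval: the minimum of the levels of the integers `c` with
`a < c ≤ b` that it contains. -/
noncomputable def ivLvl (ℓ : ℕ) (iv : Iv) : ℕ :=
  if h : (Finset.Ioc iv.1 iv.2).Nonempty then (Finset.Ioc iv.1 iv.2).inf' h (lvlZ ℓ)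
  else 0

lemma pv_lt_of_lt_pow {ℓ n : ℕ} (h0 : 0 < n) (h : n < 2 ^ ℓ) :
    padicValNat 2 n < ℓ := by
  by_contra hle
  push_neg at hle
  have hd : 2 ^ ℓ ∣ n := dvd_trans (pow_dvd_pow 2 hle) pow_padicValNat_dvd
  have := Nat.le_of_dvd h0 hd
  omega

lemma between_nat {v n1 n2 : ℕ} (h0 : 0 < n1) (h12 : n1 < n2)
    (hv1 : padicValNat 2 n1 = v) (hv2 : padicValNat 2 n2 = v) :
    n1 + 2 ^ v < n2 ∧ v + 1 ≤ padicValNat 2 (n1 + 2 ^ v) := by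
  have h02 : 0 < n2 := h0.trans h12
  have d1 : 2 ^ v ∣ n1 := hv1 ▸ pow_padicValNat_dvd
  have d2 : 2 ^ v ∣ n2 := hv2 ▸ pow_padicValNat_dvd
  obtain ⟨a, ha⟩ := d1
  obtain ⟨b, hb⟩ := d2
  have hna : ¬ 2 ^ (v + 1) ∣ n1 := by
    rw [← hv1]; exact pow_succ_padicValNat_not_dvd h0.ne'
  have hnb : ¬ 2 ^ (v + 1) ∣ n2 := by
    rw [← hv2]; exact pow_succ_padicValNat_not_dvd h02.ne'
  have haodd : ¬ 2 ∣ a := by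
    intro hd; exact hna (by rw [ha, pow_succ]; exact mul_dvd_mul_left _ hd)
  have hbodd : ¬ 2 ∣ b := by
    intro hd; exact hnb (by rw [hb, pow_succ]; exact mul_dvd_mul_left _ hd)
  have hab : a < b := by
    have := Nat.two_pow_pos v
    rw [ha, hb] at h12
    exact Nat.lt_of_mul_lt_mul_left h12
  have hab2 : a + 2 ≤ b := by
    rcases Nat.even_or_odd a with he | ho
    · exact absurd he.two_dvd haodd
    · rcases Nat.even_or_odd b with he' | ho'
      · exact absurd he'.two_dvd hbodd
      · obtain ⟨x, hx⟩ := ho; obtain ⟨y, hy⟩ := ho'; omega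
  have hm : n1 + 2 ^ v = 2 ^ v * (a + 1) := by rw [ha]; ring
  have hmdvd : 2 ^ (v + 1) ∣ n1 + 2 ^ v := by
    rw [hm, pow_succ]
    exact mul_dvd_mul_left _ (by omega)
  constructor
  · rw [hm, hb]
    exact Nat.mul_lt_mul_of_le_of_lt le_rfl (by omega) (Nat.two_pow_pos v)
  · exact (padicValNat_dvd_iff_le (by positivity)).mp hmdvd

lemma toNat_lt_pow {ℓ : ℕ} {c : ℤ} (h0 : 0 < c) (hc : c ≤ 2 ^ ℓ - 1) :
    c.toNat < 2 ^ ℓ := by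
  have h1 : (c.toNat : ℤ) = c := Int.toNat_of_nonneg h0.le
  have h2 : ((2 ^ ℓ : ℕ) : ℤ) = 2 ^ ℓ := by push_cast; ring
  omega

lemma lvlZ_bounds {ℓ : ℕ} {c : ℤ} (h0 : 0 < c) (hc : c ≤ 2 ^ ℓ - 1) :
    1 ≤ lvlZ ℓ c ∧ lvlZ ℓ c ≤ ℓ := by
  have hn : 0 < c.toNat := by omega
  have := pv_lt_of_lt_pow hn (toNat_lt_pow h0 hc)
  unfold lvlZ; omega

lemma pv_eq {ℓ i : ℕ} (hiℓ : i ≤ ℓ) {c : ℤ} (h0 : 0 < c) (hc : c ≤ 2 ^ ℓ - 1)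
    (hl : lvlZ ℓ c = i) : padicValNat 2 c.toNat = ℓ - i := by
  have hn : 0 < c.toNat := by omega
  have := pv_lt_of_lt_pow hn (toNat_lt_pow h0 hc)
  unfold lvlZ at hl; omega

lemma between_int {ℓ i : ℕ} (hi : 1 ≤ i) (hiℓ : i ≤ ℓ) {c1 c2 : ℤ}
    (h01 : 0 < c1) (h12 : c1 < c2) (hc2 : c2 ≤ 2 ^ ℓ - 1)
    (hl1 : lvlZ ℓ c1 = i) (hl2 : lvlZ ℓ c2 = i) :
    ∃ m : ℤ, c1 < m ∧ m < c2 ∧ lvlZ ℓ m < i := by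
  have h02 : 0 < c2 := h01.trans h12
  have hc1 : c1 ≤ 2 ^ ℓ - 1 := le_of_lt (lt_of_lt_of_le h12 hc2)
  have hp1 := pv_eq hiℓ h01 hc1 hl1
  have hp2 := pv_eq hiℓ h02 hc2 hl2
  set v := ℓ - i with hv
  have hcast1 : (c1.toNat : ℤ) = c1 := Int.toNat_of_nonneg h01.le
  have hcast2 : (c2.toNat : ℤ) = c2 := Int.toNat_of_nonneg h02.le
  have hcastp : ((2 ^ v : ℕ) : ℤ) = 2 ^ v := by push_cast; ring
  obtain ⟨hlt, hpv⟩ := between_nat (v := v) (n1 := c1.toNat) (n2 := c2.toNat)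
    (by omega) (by omega) hp1 hp2
  refine ⟨((c1.toNat + 2 ^ v : ℕ) : ℤ), ?_, ?_, ?_⟩
  · rw [← hcast1]
    exact_mod_cast Nat.lt_add_of_pos_right (Nat.two_pow_pos v)
  · rw [← hcast2]
    exact_mod_cast hlt
  · rw [show lvlZ ℓ ((c1.toNat + 2 ^ v : ℕ) : ℤ)
        = ℓ - padicValNat 2 ((c1.toNat + 2 ^ v : ℕ) : ℤ).toNat from rfl,
      Int.toNat_natCast]
    omega

lemma ivLvl_le {ℓ : ℕ} {iv : Iv} {c : ℤ} (hc1 : iv.1 < c) (hc2 : c ≤ iv.2) :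
    ivLvl ℓ iv ≤ lvlZ ℓ c := by
  have hm : c ∈ Finset.Ioc iv.1 iv.2 := Finset.mem_Ioc.mpr ⟨hc1, hc2⟩
  have hne : (Finset.Ioc iv.1 iv.2).Nonempty := ⟨c, hm⟩
  unfold ivLvl
  rw [dif_pos hne]
  exact Finset.inf'_le _ hm

lemma ivLvl_exists {ℓ : ℕ} {iv : Iv} (h : iv.1 < iv.2) :
    ∃ c, iv.1 < c ∧ c ≤ iv.2 ∧ lvlZ ℓ c = ivLvl ℓ iv := by
  have hne : (Finset.Ioc iv.1 iv.2).Nonempty := Finset.nonempty_Ioc.mpr h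
  obtain ⟨c, hc, hceq⟩ := Finset.exists_mem_eq_inf' hne (lvlZ ℓ)
  rw [Finset.mem_Ioc] at hc
  refine ⟨c, hc.1, hc.2, ?_⟩
  unfold ivLvl
  rw [dif_pos hne, hceq]

lemma not_two_aux {ℓ i : ℕ} (hi : 1 ≤ i) (hiℓ : i ≤ ℓ) {iv : Iv}
    (h1 : 0 ≤ iv.1) (h3 : iv.2 ≤ 2 ^ ℓ - 1) (hlvl : ivLvl ℓ iv = i)
    {c c' : ℤ} (hca : iv.1 < c) (hcb : c ≤ iv.2) (hca' : iv.1 < c') (hcb' : c' ≤ iv.2)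
    (hl : lvlZ ℓ c = i) (hl' : lvlZ ℓ c' = i) : c = c' := by
  rcases lt_trichotomy c c' with h | h | h
  · obtain ⟨m, hm1, hm2, hm3⟩ :=
      between_int hi hiℓ (lt_of_le_of_lt h1 hca) h (le_trans hcb' h3) hl hl'
    have := ivLvl_le (ℓ := ℓ) (iv := iv) (c := m) (by omega) (by omega)
    omega
  · exact h
  · obtain ⟨m, hm1, hm2, hm3⟩ :=
      between_int hi hiℓ (lt_of_le_of_lt h1 hca') h (le_trans hcb h3) hl' hl
    have := ivLvl_le (ℓ := ℓ) (iv := iv) (c := m) (by omega) (by omega)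
    omega

lemma not_overlap {ℓ i : ℕ} (hi : 1 ≤ i) (hiℓ : i ≤ ℓ) {iv1 iv2 : Iv}
    (h1a : 0 ≤ iv1.1) (h2b : iv2.2 ≤ 2 ^ ℓ - 1)
    (hl1 : ivLvl ℓ iv1 = i) (hl2 : ivLvl ℓ iv2 = i)
    {c1 c2 : ℤ} (hc1a : iv1.1 < c1) (hc1b : c1 ≤ iv1.2)
    (hc2a : iv2.1 < c2) (hc2b : c2 ≤ iv2.2)
    (hlc1 : lvlZ ℓ c1 = i) (hlc2 : lvlZ ℓ c2 = i)
    (hcc : c1 < c2) (hov : Overlap iv1 iv2) : False := by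
  unfold Overlap at hov
  obtain ⟨m, hm1, hm2, hm3⟩ :=
    between_int hi hiℓ (lt_of_le_of_lt h1a hc1a) hcc (le_trans hc2b h2b) hlc1 hlc2
  rcases le_or_gt m iv1.2 with h | h
  · have := ivLvl_le (ℓ := ℓ) (iv := iv1) (c := m) (by omega) h
    omega
  · have hA : iv2.1 ≤ max iv1.1 iv2.1 := le_max_right _ _
    have hB : min iv1.2 iv2.2 ≤ iv1.2 := min_le_left _ _
    have := ivLvl_le (ℓ := ℓ) (iv := iv2) (c := m) (by omega) (by omega)
    omega

lemma overlap_comm {x y : Iv} (h : Overlap x y) : Overlap y x := by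
  unfold Overlap at *
  rw [max_comm, min_comm]
  exact h

/-- Level decomposition for Classify-and-Randomly-Select.
For a finite set `S` of intervals with endpoints in `{0, …, 2^ℓ − 1}` and
`S_i` the intervals of `S` of level `i`: `Opt S_i` equals the number of distinct
level-`i` integers contained in some interval of `S_i`, and
`∑_{i=1}^{ℓ} Opt S_i ≥ Opt S`. -/
theorem level_decomposition (ℓ : ℕ) (hℓ : 1 ≤ ℓ) (S : Finset Iv)
    (hv : ∀ i ∈ S, 0 ≤ i.1 ∧ i.1 < i.2 ∧ i.2 ≤ 2 ^ ℓ - 1) :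
    (∀ i : ℕ, 1 ≤ i → i ≤ ℓ →
      Opt (S.filter fun iv => ivLvl ℓ iv = i) =
        ((Finset.Ioc (0 : ℤ) (2 ^ ℓ - 1)).filter fun c =>
          lvlZ ℓ c = i ∧
            ∃ iv ∈ S.filter (fun iv => ivLvl ℓ iv = i), iv.1 < c ∧ c ≤ iv.2).card) ∧
    Opt S ≤ ∑ i ∈ Finset.Icc 1 ℓ, Opt (S.filter fun iv => ivLvl ℓ iv = i) := by
  constructor
  · intro i hi hiℓ
    set Si := S.filter (fun iv => ivLvl ℓ iv = i) with hSi
    set C := (Finset.Ioc (0 : ℤ) (2 ^ ℓ - 1)).filter (fun c =>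
          lvlZ ℓ c = i ∧ ∃ iv ∈ Si, iv.1 < c ∧ c ≤ iv.2) with hC
    apply le_antisymm
    · apply Finset.sup_le
      intro T hT
      rw [Finset.mem_filter, Finset.mem_powerset] at hT
      obtain ⟨hTsub, hTno⟩ := hT
      have hEx : ∀ iv : Iv, ∃ c : ℤ, iv ∈ T → iv.1 < c ∧ c ≤ iv.2 ∧ lvlZ ℓ c = i := by
        intro iv
        by_cases hm : iv ∈ T
        · have hS : iv ∈ Si := hTsub hm
          rw [hSi, Finset.mem_filter] at hS
          obtain ⟨hS, hlvl⟩ := hS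
          obtain ⟨c, h1, h2, h3⟩ := ivLvl_exists (ℓ := ℓ) (hv iv hS).2.1
          exact ⟨c, fun _ => ⟨h1, h2, h3.trans hlvl⟩⟩
        · exact ⟨0, fun h => absurd h hm⟩
      choose f hf using hEx
      apply Finset.card_le_card_of_injOn f
      · intro iv hiv
        obtain ⟨h1, h2, h3⟩ := hf iv hiv
        have hS : iv ∈ Si := hTsub hiv
        have hS' : iv ∈ S := by
          rw [hSi, Finset.mem_filter] at hS
          exact hS.1
        have hvS := hv iv hS'
        rw [hC, Finset.mem_coe, Finset.mem_filter, Finset.mem_Ioc]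
        exact ⟨⟨lt_of_le_of_lt hvS.1 h1, le_trans h2 hvS.2.2⟩, h3, iv, hS, h1, h2⟩
      · intro a ha b hb hab
        by_contra hne
        obtain ⟨ha1, ha2, ha3⟩ := hf a ha
        obtain ⟨hb1, hb2, hb3⟩ := hf b hb
        apply hTno a ha b hb hne
        unfold Overlap
        rw [hab] at ha1 ha2
        exact lt_of_lt_of_le (max_lt ha1 hb1) (le_min ha2 hb2)
    · have hEx : ∀ c : ℤ, ∃ iv : Iv, c ∈ C → iv ∈ Si ∧ iv.1 < c ∧ c ≤ iv.2 := by
        intro c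
        by_cases hm : c ∈ C
        · have hm' := hm
          rw [hC, Finset.mem_filter] at hm'
          obtain ⟨-, -, iv, hiv, h1, h2⟩ := hm'
          exact ⟨iv, fun _ => ⟨hiv, h1, h2⟩⟩
        · exact ⟨(0, 0), fun h => absurd h hm⟩
      choose g hg using hEx
      have hfacts : ∀ c ∈ C, lvlZ ℓ c = i ∧ g c ∈ S ∧ ivLvl ℓ (g c) = i ∧
          (g c).1 < c ∧ c ≤ (g c).2 := by
        intro c hc
        obtain ⟨hg1, hg2, hg3⟩ := hg c hc
        rw [hSi, Finset.mem_filter] at hg1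
        rw [hC, Finset.mem_filter] at hc
        exact ⟨hc.2.1, hg1.1, hg1.2, hg2, hg3⟩
      have hinj : Set.InjOn g ↑C := by
        intro c1 h1 c2 h2 heq
        have hf1 := hfacts c1 (Finset.mem_coe.mp h1)
        have hf2 := hfacts c2 (Finset.mem_coe.mp h2)
        have hvS := hv (g c1) hf1.2.1
        exact not_two_aux hi hiℓ hvS.1 hvS.2.2 hf1.2.2.1 hf1.2.2.2.1 hf1.2.2.2.2
          (heq ▸ hf2.2.2.2.1) (heq ▸ hf2.2.2.2.2) hf1.1 hf2.1
      have hTsub : C.image g ⊆ Si := by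
        intro iv hiv
        rw [Finset.mem_image] at hiv
        obtain ⟨c, hc, rfl⟩ := hiv
        exact (hg c hc).1
      have hTno : NonOverlapping (C.image g) := by
        intro x hx y hy hxy hov
        rw [Finset.mem_image] at hx hy
        obtain ⟨c1, hc1, rfl⟩ := hx
        obtain ⟨c2, hc2, rfl⟩ := hy
        have hne : c1 ≠ c2 := fun h => hxy (by rw [h])
        have hf1 := hfacts c1 hc1
        have hf2 := hfacts c2 hc2
        have hv1 := hv (g c1) hf1.2.1
        have hv2 := hv (g c2) hf2.2.1
        rcases lt_or_gt_of_ne hne with h | h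
        · exact not_overlap hi hiℓ hv1.1 hv2.2.2 hf1.2.2.1 hf2.2.2.1
            hf1.2.2.2.1 hf1.2.2.2.2 hf2.2.2.2.1 hf2.2.2.2.2 hf1.1 hf2.1 h hov
        · exact not_overlap hi hiℓ hv2.1 hv1.2.2 hf2.2.2.1 hf1.2.2.1
            hf2.2.2.2.1 hf2.2.2.2.2 hf1.2.2.2.1 hf1.2.2.2.2 hf2.1 hf1.1 h
            (overlap_comm hov)
      calc C.card = (C.image g).card := (Finset.card_image_of_injOn hinj).symm
        _ ≤ Opt Si := Finset.le_sup
            (Finset.mem_filter.mpr ⟨Finset.mem_powerset.mpr hTsub, hTno⟩)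
  · apply Finset.sup_le
    intro T hT
    rw [Finset.mem_filter, Finset.mem_powerset] at hT
    obtain ⟨hTsub, hTno⟩ := hT
    have hfib : ∀ iv ∈ T, ivLvl ℓ iv ∈ Finset.Icc 1 ℓ := by
      intro iv hiv
      have hvS := hv iv (hTsub hiv)
      obtain ⟨c, h1, h2, h3⟩ := ivLvl_exists (ℓ := ℓ) hvS.2.1
      rw [Finset.mem_Icc, ← h3]
      exact lvlZ_bounds (lt_of_le_of_lt hvS.1 h1) (le_trans h2 hvS.2.2)
    rw [Finset.card_eq_sum_card_fiberwise hfib]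
    apply Finset.sum_le_sum
    intro i _
    apply Finset.le_sup
    rw [Finset.mem_filter, Finset.mem_powerset]
    constructor
    · intro iv hiv
      rw [Finset.mem_filter] at hiv ⊢
      exact ⟨hTsub hiv.1, hiv.2⟩
    · intro a ha b hb hne
      rw [Finset.mem_filter] at ha hb
      exact hTno a ha.1 b hb.1 hne
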